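/- Let a, b ≥ 2 be coprime natural numbers and let i ≥ 1. Then i^{(a−1)(b−1)/2} · M_i · (a·i)! · (b·i)! divides (i!)^{(a−1)(b−1)} · i! · (a·b·i)!, where M_i denotes the product of all natural numbers m with 1 ≤ m ≤ a·b·i and ℓ(a,b,m) = i. (Here (a−1)(b−1) is even since a and b are coprime; the quotient is the order of the finite abelian group K_{2i−1}(ℤ[x,y]/(x^b−y^a), (x,y)).) -/

import Mathlib

set_option linter.unusedSectionVars false
set_option linter.unusedVariables false

/-- `ell a b m` is the number of pairs `(i, j)` of positive integers with `m = a * i + b * j`. -/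
noncomputable def ell (a b m : ℕ) : ℕ :=
  {p : ℕ × ℕ | 0 < p.1 ∧ 0 < p.2 ∧ m = a * p.1 + b * p.2}.ncard

namespace OrderK

open Finset Nat

/-- Finset of representations. -/
def reps (a b m : ℕ) : Finset (ℕ × ℕ) :=
  (Finset.Icc 1 m ×ˢ Finset.Icc 1 m).filter (fun p => m = a * p.1 + b * p.2)

lemma mem_reps {a b m : ℕ} (ha : 1 ≤ a) (hb : 1 ≤ b) {p : ℕ × ℕ} :
    p ∈ reps a b m ↔ 0 < p.1 ∧ 0 < p.2 ∧ m = a * p.1 + b * p.2 := by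
  simp only [reps, mem_filter, mem_product, mem_Icc]
  constructor
  · rintro ⟨⟨⟨h1, _⟩, ⟨h2, _⟩⟩, h⟩; exact ⟨h1, h2, h⟩
  · rintro ⟨h1, h2, h⟩
    have e1 : p.1 ≤ a * p.1 := Nat.le_mul_of_pos_left _ (by omega)
    have e2 : p.2 ≤ b * p.2 := Nat.le_mul_of_pos_left _ (by omega)
    have hp1 : p.1 ≤ m := by omega
    have hp2 : p.2 ≤ m := by omega
    exact ⟨⟨⟨h1, hp1⟩, ⟨h2, hp2⟩⟩, h⟩

lemma ell_eq_card (a b m : ℕ) (ha : 1 ≤ a) (hb : 1 ≤ b) :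
    ell a b m = (reps a b m).card := by
  rw [ell, ← Set.ncard_coe_finset]
  congr 1
  ext p
  simp [mem_reps ha hb]


/-- Two representations with first coordinates less than `b` apart coincide. -/
lemma rep_unique {a b : ℕ} (ha : 1 ≤ a) (hab : Nat.Coprime a b)
    {j k j' k' : ℕ} (heq : a * j + b * k = a * j' + b * k')
    (hj : j < j') (hjb : j' < j + b) : False := by
  obtain ⟨d, rfl⟩ : ∃ d, j' = j + d := ⟨j' - j, by omega⟩
  have hd1 : 1 ≤ d := by omega
  have hdb : d < b := by omega
  have hmul : a * (j + d) = a * j + a * d := by ring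
  have had : 0 < a * d := by positivity
  have hk'k : k' < k := by
    rcases Nat.lt_or_ge k' k with h | h
    · exact h
    · exfalso
      have : b * k ≤ b * k' := Nat.mul_le_mul_left _ h
      omega
  obtain ⟨e, rfl⟩ : ∃ e, k = k' + e := ⟨k - k', by omega⟩
  have he1 : 1 ≤ e := by omega
  have hbe : b * (k' + e) = b * k' + b * e := by ring
  have hbead : b * e = a * d := by omega
  have hbd : b ∣ d := Nat.Coprime.dvd_of_dvd_mul_left hab.symm ⟨e, by omega⟩
  have := Nat.le_of_dvd (by omega) hbd
  omega

section
variable {a b : ℕ} (ha : 2 ≤ a) (hb : 2 ≤ b) (hab : Nat.Coprime a b)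

include ha hb hab in
/-- On `[0, a*b]` there is at most one representation. -/
lemma reps_card_le_one {m : ℕ} (hm : m ≤ a * b) : (reps a b m).card ≤ 1 := by
  rw [Finset.card_le_one]
  intro p hp q hq
  rw [mem_reps (by omega) (by omega)] at hp hq
  obtain ⟨hp1, hp2, hpe⟩ := hp
  obtain ⟨hq1, hq2, hqe⟩ := hq
  have hjb : ∀ j k : ℕ, 0 < k → m = a * j + b * k → j < b := by
    intro j k hk hmjk
    by_contra hcon
    push_neg at hcon
    have h1 : a * b ≤ a * j := Nat.mul_le_mul_left _ hcon
    have h2 : b ≤ b * k := Nat.le_mul_of_pos_right _ hk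
    omega
  have hpj := hjb p.1 p.2 hp2 hpe
  have hqj := hjb q.1 q.2 hq2 hqe
  have heq : a * p.1 + b * p.2 = a * q.1 + b * q.2 := by omega
  have h1 : p.1 = q.1 := by
    rcases Nat.lt_trichotomy p.1 q.1 with h | h | h
    · exact (rep_unique (by omega) hab heq h (by omega)).elim
    · exact h
    · exact (rep_unique (by omega) hab heq.symm h (by omega)).elim
  have h2 : p.2 = q.2 := by
    rw [h1] at heq
    have : b * p.2 = b * q.2 := by omega
    exact Nat.eq_of_mul_eq_mul_left (by omega) this
  exact Prod.ext h1 h2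

include ha hb hab in
lemma exists_j (m : ℕ) : ∃ j, 1 ≤ j ∧ j ≤ b ∧ a * j % b = m % b := by
  obtain ⟨a', -, ha'⟩ := Nat.exists_mul_mod_eq_one_of_coprime hab (by omega)
  set j₁ := (a' * m) % b with hj₁
  have h2 : a * j₁ ≡ a * (a' * m) [MOD b] := (Nat.mod_modEq _ _).mul_left a
  have h3 : a * (a' * m) = (a * a') * m := by ring
  have h4 : a * a' ≡ 1 [MOD b] := by
    show (a * a') % b = 1 % b
    rw [ha', Nat.mod_eq_of_lt (by omega)]
  have h5 : (a * a') * m ≡ 1 * m [MOD b] := h4.mul_right m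
  have hkey : a * j₁ % b = m % b := by
    have := (h2.trans (h3 ▸ h5)).trans (by rw [one_mul] : 1 * m ≡ m [MOD b])
    exact this
  by_cases h0 : j₁ = 0
  · refine ⟨b, by omega, le_rfl, ?_⟩
    rw [h0, Nat.mul_zero] at hkey
    simp only [Nat.zero_mod] at hkey
    rw [Nat.mul_mod_left]
    omega
  · exact ⟨j₁, by omega, le_of_lt (Nat.mod_lt _ (by omega)), hkey⟩

include ha hb hab in
lemma ell_add_ab {m : ℕ} (hm : 1 ≤ m) : ell a b (m + a * b) = ell a b m + 1 := by
  rw [ell_eq_card _ _ _ (by omega) (by omega), ell_eq_card _ _ _ (by omega) (by omega)]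
  classical
  have hsplit := Finset.card_filter_add_card_filter_not
    (s := reps a b (m + a * b)) (p := fun p => b < p.1)
  have h1 : ((reps a b (m + a * b)).filter (fun p => b < p.1)).card = (reps a b m).card := by
    apply Finset.card_bij (fun p _ => (p.1 - b, p.2))
    · intro p hp
      simp only [Finset.mem_filter] at hp
      obtain ⟨hp, hb1⟩ := hp
      rw [mem_reps (by omega) (by omega)] at hp ⊢
      obtain ⟨hp1, hp2, hpe⟩ := hp
      refine ⟨by simp; omega, by simpa using hp2, ?_⟩
      show m = a * (p.1 - b) + b * p.2
      have hx : a * (p.1 - b) + a * b = a * p.1 := by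
        rw [← Nat.mul_add, Nat.sub_add_cancel (le_of_lt hb1)]
      omega
    · intro p hp q hq hpq
      simp only [Finset.mem_filter] at hp hq
      have hpb := hp.2; have hqb := hq.2
      simp only [Prod.ext_iff] at hpq ⊢
      obtain ⟨e1, e2⟩ := hpq
      exact ⟨by omega, e2⟩
    · intro p hp
      rw [mem_reps (by omega) (by omega)] at hp
      obtain ⟨hp1, hp2, hpe⟩ := hp
      refine ⟨(p.1 + b, p.2), ?_, by simp⟩
      simp only [Finset.mem_filter]
      constructor
      · rw [mem_reps (by omega) (by omega)]
        refine ⟨by simp; omega, by simpa using hp2, ?_⟩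
        show m + a * b = a * (p.1 + b) + b * p.2
        have hx : a * (p.1 + b) = a * p.1 + a * b := by ring
        omega
      · show b < p.1 + b
        omega
  have h2 : ((reps a b (m + a * b)).filter (fun p => ¬ b < p.1)).card = 1 := by
    rw [Finset.card_eq_one]
    obtain ⟨j, hj1, hjb, hjm⟩ := exists_j ha hb hab m
    have hjab : a * j ≤ a * b := Nat.mul_le_mul_left _ hjb
    have hdvd : b ∣ m + a * b - a * j := by
      have h1 : (m + a * b) % b = (a * j) % b := by
        rw [Nat.add_mul_mod_self_right, hjm]
      exact (Nat.modEq_iff_dvd' (by omega)).mp h1.symm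
    obtain ⟨k, hk⟩ := hdvd
    have hk1 : 1 ≤ k := by
      rcases Nat.eq_zero_or_pos k with h | h
      · exfalso; rw [h, Nat.mul_zero] at hk; omega
      · exact h
    refine ⟨(j, k), ?_⟩
    ext p
    simp only [Finset.mem_filter, Finset.mem_singleton, not_lt]
    constructor
    · rintro ⟨hp, hpb⟩
      rw [mem_reps (by omega) (by omega)] at hp
      obtain ⟨hp1, hp2, hpe⟩ := hp
      have heq : a * p.1 + b * p.2 = a * j + b * k := by omega
      have h1 : p.1 = j := by
        rcases Nat.lt_trichotomy p.1 j with h | h | h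
        · exact (rep_unique (by omega) hab heq h (by omega)).elim
        · exact h
        · exact (rep_unique (by omega) hab heq.symm h (by omega)).elim
      have h2 : p.2 = k := by
        rw [h1] at heq
        exact Nat.eq_of_mul_eq_mul_left (show 0 < b by omega) (by omega)
      exact Prod.ext h1 h2
    · rintro rfl
      refine ⟨?_, by show j ≤ b; omega⟩
      rw [mem_reps (by omega) (by omega)]
      refine ⟨by show 0 < j; omega, by show 0 < k; omega, ?_⟩
      show m + a * b = a * j + b * k
      omega
  omega

include ha hb hab in
lemma ell_add_mul {m : ℕ} (hm : 1 ≤ m) (t : ℕ) :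
    ell a b (m + a * b * t) = ell a b m + t := by
  induction t with
  | zero => simp
  | succ n ih =>
      have h : m + a * b * (n + 1) = (m + a * b * n) + a * b := by ring
      rw [h, ell_add_ab ha hb hab (by omega), ih]
      omega


include ha hb hab in
lemma ell_le_one {m : ℕ} (hm : m ≤ a * b) : ell a b m ≤ 1 := by
  rw [ell_eq_card _ _ _ (by omega) (by omega)]
  exact reps_card_le_one ha hb hab hm

include ha hb in
lemma ell_pos_iff {m : ℕ} : 0 < ell a b m ↔ ∃ j k, 0 < j ∧ 0 < k ∧ m = a * j + b * k := by
  rw [ell_eq_card _ _ _ (by omega) (by omega), Finset.card_pos]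
  constructor
  · rintro ⟨p, hp⟩
    rw [mem_reps (by omega) (by omega)] at hp
    exact ⟨p.1, p.2, hp⟩
  · rintro ⟨j, k, h1, h2, h3⟩
    exact ⟨(j, k), (mem_reps (by omega) (by omega)).mpr ⟨h1, h2, h3⟩⟩

include ha hb hab in
/-- Not both `m` and its partner (summing to `ab+a+b`) are representable. -/
lemma not_both {m m' : ℕ} (hsum : m + m' = a * b + a + b)
    (h1 : 0 < ell a b m) (h2 : 0 < ell a b m') : False := by
  rw [ell_pos_iff ha hb] at h1 h2
  obtain ⟨j, k, hj, hk, hm⟩ := h1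
  obtain ⟨j', k', hj', hk', hm'⟩ := h2
  have hJ : a * (j + j') = a * j + a * j' := by ring
  have hK : b * (k + k') = b * k + b * k' := by ring
  obtain ⟨J, hJ2⟩ : ∃ J, j + j' = J + 1 := ⟨j + j' - 1, by omega⟩
  obtain ⟨K, hK2⟩ : ∃ K, k + k' = K + 1 := ⟨k + k' - 1, by omega⟩
  have hJ1 : 1 ≤ J := by omega
  have hK1 : 1 ≤ K := by omega
  have hJe : a * (J + 1) = a * J + a := by ring
  have hKe : b * (K + 1) = b * K + b := by ring
  have hJ3 : a * (j + j') = a * (J + 1) := by rw [hJ2]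
  have hK3 : b * (k + k') = b * (K + 1) := by rw [hK2]
  have hmain : a * J + b * K = a * b := by omega
  have hdvd : b ∣ a * J := by
    have h1 : b ∣ a * b := ⟨a, by ring⟩
    have h2 : b ∣ b * K := ⟨K, rfl⟩
    have : a * J = a * b - b * K := by omega
    rw [this]
    exact Nat.dvd_sub h1 h2
  have hbJ : b ∣ J := Nat.Coprime.dvd_of_dvd_mul_left hab.symm hdvd
  have hJb : b ≤ J := Nat.le_of_dvd (by omega) hbJ
  have : a * b ≤ a * J := Nat.mul_le_mul_left _ hJb
  have : b ≤ b * K := Nat.le_mul_of_pos_right _ (by omega)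
  omega

include ha hb hab in
/-- At least one of `m`, `m'` is representable when `m + m' = ab + a + b`, `a+b ≤ m ≤ ab`. -/
lemma at_least_one {m m' : ℕ} (hsum : m + m' = a * b + a + b)
    (hmlo : a + b ≤ m) (hmhi : m ≤ a * b) (h0 : ell a b m = 0) : 0 < ell a b m' := by
  obtain ⟨j, hj1, hjb, hjm⟩ := exists_j ha hb hab m
  have hjab : a * j ≤ a * b := Nat.mul_le_mul_left _ hjb
  -- if a*j + b ≤ m then m is representable, contradiction
  have hcase : m < a * j + b := by
    by_contra hcon
    push_neg at hcon
    have hdvd : b ∣ m - a * j := by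
      have hmod : a * j ≡ m [MOD b] := hjm
      exact (Nat.modEq_iff_dvd' (by omega)).mp hmod
    obtain ⟨k, hk⟩ := hdvd
    have hk1 : 1 ≤ k := by
      rcases Nat.eq_zero_or_pos k with h | h
      · exfalso; rw [h, Nat.mul_zero] at hk; omega
      · exact h
    have : 0 < ell a b m := by
      rw [ell_pos_iff ha hb]
      exact ⟨j, k, by omega, by omega, by omega⟩
    omega
  -- otherwise m' = a*(b+1-j) + b*k with d = a*j + b - m = b*k
  have hdvd : b ∣ a * j + b - m := by
    have h1 : m ≡ a * j + b [MOD b] := by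
      show m % b = (a * j + b) % b
      rw [Nat.add_mod_right, hjm]
    exact (Nat.modEq_iff_dvd' (by omega)).mp h1
  obtain ⟨k, hk⟩ := hdvd
  have hk1 : 1 ≤ k := by
    rcases Nat.eq_zero_or_pos k with h | h
    · exfalso; rw [h, Nat.mul_zero] at hk; omega
    · exact h
  rw [ell_pos_iff ha hb]
  refine ⟨b + 1 - j, k, by omega, by omega, ?_⟩
  have hx : a * (b + 1 - j) + a * j = a * (b + 1) := by
    rw [← Nat.mul_add]
    congr 1
    omega
  have hy : a * (b + 1) = a * b + a := by ring
  omega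

include ha hb hab in
lemma B1 {m : ℕ} (hmlo : a + b ≤ m) (hmhi : m ≤ a * b) :
    (ell a b m = 1 ↔ ell a b (a * b + a + b - m) = 0) := by
  set m' := a * b + a + b - m with hm'
  have hsum : m + m' = a * b + a + b := by omega
  have hle := ell_le_one ha hb hab hmhi
  have hle' : ell a b m' ≤ 1 := ell_le_one ha hb hab (by omega)
  constructor
  · intro h1
    by_contra hne
    exact not_both ha hb hab hsum (by omega) (by omega)
  · intro h0'
    have hm'lo : a + b ≤ m' := by
      by_contra hcon
      push_neg at hcon
      omega
    have := at_least_one ha hb hab (show m' + m = a * b + a + b by omega) hm'lo (by omega) h0'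
    omega

/-- The finset of `m ∈ [1, ab]` with exactly one representation. -/
noncomputable def Sfin (a b : ℕ) : Finset ℕ := (Finset.Icc 1 (a * b)).filter (fun m => ell a b m = 1)

include ha hb hab in
lemma mem_Sfin_props {m : ℕ} (hm : m ∈ Sfin a b) :
    0 < m ∧ m ≤ a * b ∧ a + b ≤ m ∧ ¬ a ∣ m ∧ ¬ b ∣ m := by
  simp only [Sfin, Finset.mem_filter, Finset.mem_Icc] at hm
  obtain ⟨⟨hm1, hm2⟩, hme⟩ := hm
  have hpos : 0 < ell a b m := by omega
  rw [ell_pos_iff ha hb] at hpos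
  obtain ⟨j, k, hj, hk, hjk⟩ := hpos
  have haj : a ≤ a * j := Nat.le_mul_of_pos_right _ hj
  have hbk : b ≤ b * k := Nat.le_mul_of_pos_right _ hk
  have hjb : j < b := by
    by_contra hcon
    push_neg at hcon
    have : a * b ≤ a * j := Nat.mul_le_mul_left _ hcon
    omega
  have hka : k < a := by
    by_contra hcon
    push_neg at hcon
    have : b * a ≤ b * k := Nat.mul_le_mul_left _ hcon
    have : b * a = a * b := by ring
    omega
  refine ⟨by omega, hm2, by omega, ?_, ?_⟩
  · intro hdvd
    have h1 : a ∣ b * k := by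
      have : b * k = m - a * j := by omega
      rw [this]
      exact Nat.dvd_sub hdvd ⟨j, rfl⟩
    have h2 : a ∣ k := Nat.Coprime.dvd_of_dvd_mul_left hab h1
    have := Nat.le_of_dvd (by omega) h2
    omega
  · intro hdvd
    have h1 : b ∣ a * j := by
      have : a * j = m - b * k := by omega
      rw [this]
      exact Nat.dvd_sub hdvd ⟨k, rfl⟩
    have h2 : b ∣ j := Nat.Coprime.dvd_of_dvd_mul_left hab.symm h1
    have := Nat.le_of_dvd (by omega) h2
    omega

include ha hb hab in
/-- Sylvester-type count. -/
lemma sylvester : 2 * (Sfin a b).card = (a - 1) * (b - 1) := by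
  classical
  have hcardT : (Finset.Icc (a + b) (a * b)).card = (a - 1) * (b - 1) := by
    rw [Nat.card_Icc]
    obtain ⟨a', rfl⟩ : ∃ a', a = a' + 2 := ⟨a - 2, by omega⟩
    obtain ⟨b', rfl⟩ : ∃ b', b = b' + 2 := ⟨b - 2, by omega⟩
    have e1 : (a' + 2) * (b' + 2) = a' * b' + 2 * a' + 2 * b' + 4 := by ring
    have e2 : (a' + 2 - 1) * (b' + 2 - 1) = a' * b' + a' + b' + 1 := by
      show (a' + 1) * (b' + 1) = a' * b' + a' + b' + 1
      ring
    omega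
  have hS_eq : Sfin a b = (Finset.Icc (a + b) (a * b)).filter (fun m => ell a b m = 1) := by
    ext m
    simp only [Sfin, Finset.mem_filter, Finset.mem_Icc]
    constructor
    · rintro ⟨⟨h1, h2⟩, h3⟩
      have hmem : m ∈ Sfin a b := by
        simp only [Sfin, Finset.mem_filter, Finset.mem_Icc]
        exact ⟨⟨h1, h2⟩, h3⟩
      have := mem_Sfin_props ha hb hab hmem
      exact ⟨⟨this.2.2.1, h2⟩, h3⟩
    · rintro ⟨⟨h1, h2⟩, h3⟩
      exact ⟨⟨by omega, h2⟩, h3⟩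
  have hbij : (Sfin a b).card
      = ((Finset.Icc (a + b) (a * b)).filter (fun m => ¬ ell a b m = 1)).card := by
    apply Finset.card_bij (fun m _ => a * b + a + b - m)
    · intro m hm
      have hp := mem_Sfin_props ha hb hab hm
      simp only [Sfin, Finset.mem_filter, Finset.mem_Icc] at hm
      simp only [Finset.mem_filter, Finset.mem_Icc]
      refine ⟨⟨by omega, by omega⟩, ?_⟩
      have := (B1 ha hb hab hp.2.2.1 hp.2.1).mp hm.2
      omega
    · intro m hm m' hm' hmm
      have hp := mem_Sfin_props ha hb hab hm
      have hp' := mem_Sfin_props ha hb hab hm'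
      omega
    · intro m hm
      simp only [Finset.mem_filter, Finset.mem_Icc] at hm
      obtain ⟨⟨h1, h2⟩, h3⟩ := hm
      have hle : ell a b m ≤ 1 := ell_le_one ha hb hab h2
      have h0 : ell a b m = 0 := by omega
      refine ⟨a * b + a + b - m, ?_, by omega⟩
      have hin : a + b ≤ a * b + a + b - m ∧ a * b + a + b - m ≤ a * b := ⟨by omega, by omega⟩
      have hone : ell a b (a * b + a + b - m) = 1 := by
        rw [B1 ha hb hab hin.1 hin.2]
        have : a * b + a + b - (a * b + a + b - m) = m := by omega
        rw [this]
        exact h0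
      rw [hS_eq]
      simp only [Finset.mem_filter, Finset.mem_Icc]
      exact ⟨⟨hin.1, hin.2⟩, hone⟩
  have hpart := Finset.card_filter_add_card_filter_not
    (s := Finset.Icc (a + b) (a * b)) (p := fun m => ell a b m = 1)
  rw [← hS_eq] at hpart
  omega

include ha hb hab in
/-- Structure of the level-`i` set. -/
lemma filter_eq_image {i : ℕ} (hi : 1 ≤ i) :
    (Finset.Icc 1 (a * b * i)).filter (fun m => ell a b m = i)
      = (Sfin a b).image (fun m => a * b * (i - 1) + m) := by
  classical
  obtain ⟨i', rfl⟩ : ∃ i', i = i' + 1 := ⟨i - 1, by omega⟩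
  simp only [Nat.add_sub_cancel]
  ext m
  simp only [Finset.mem_filter, Finset.mem_Icc, Finset.mem_image, Sfin]
  constructor
  · rintro ⟨⟨hm1, hm2⟩, hme⟩
    set t := (m - 1) / (a * b) with ht
    have hab0 : 0 < a * b := by positivity
    have htle : a * b * t ≤ m - 1 := by
      rw [ht, Nat.mul_comm]
      exact Nat.div_mul_le_self _ _
    have htlt : m - 1 < a * b * (t + 1) := by
      rw [ht]
      exact Nat.lt_mul_div_succ (m - 1) hab0
    have hexp : a * b * (t + 1) = a * b * t + a * b := by ring
    have hexp2 : a * b * (i' + 1) = a * b * i' + a * b := by ring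
    have hti : t ≤ i' := by
      by_contra hcon
      push_neg at hcon
      have : a * b * (i' + 1) ≤ a * b * t := Nat.mul_le_mul_left _ hcon
      omega
    have hdec := ell_add_mul ha hb hab (m := m - a * b * t) (by omega) t
    have hmeq : (m - a * b * t) + a * b * t = m := by omega
    rw [hmeq] at hdec
    have hle1 : ell a b (m - a * b * t) ≤ 1 := ell_le_one ha hb hab (by omega)
    have hfin : ell a b (m - a * b * t) = 1 ∧ t = i' := by omega
    refine ⟨m - a * b * t, ⟨⟨by omega, by omega⟩, hfin.1⟩, ?_⟩
    rw [hfin.2] at hmeq ⊢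
    omega
  · rintro ⟨m₀, ⟨⟨h1, h2⟩, h3⟩, rfl⟩
    have he : ell a b (m₀ + a * b * i') = ell a b m₀ + i' := ell_add_mul ha hb hab (by omega) i'
    have hcomm : a * b * i' + m₀ = m₀ + a * b * i' := by ring
    have hx : a * b * (i' + 1) = a * b * i' + a * b := by ring
    refine ⟨⟨by omega, by omega⟩, ?_⟩
    rw [hcomm, he, h3]
    omega


include ha hb hab in
/-- Crux counting inequality. -/
lemma crux {q r : ℕ} (hr : 1 ≤ r) (hrq : r < q) (S : Finset ℕ)
    (hS : ∀ m ∈ S, 0 < m ∧ m ≤ a * b ∧ ¬ a ∣ m ∧ ¬ b ∣ m) :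
    a * r / q + b * r / q + (S.filter (fun m => q ∣ a * b * (r - 1) + m)).card
      ≤ a * b * r / q := by
  classical
  have hq : 2 ≤ q := by omega
  have hq0 : 0 < q := by omega
  set C := S.filter (fun m => q ∣ a * b * (r - 1) + m) with hC
  set T := C.image (fun m => a * b * (r - 1) + m) with hT
  set U := (Finset.Icc 1 (a * r / q)).image (fun v => b * (q * v)) with hU
  set V := (Finset.Icc 1 (b * r / q)).image (fun w => a * (q * w)) with hV
  set W := (Finset.Ioc 0 (a * b * r)).filter (fun x => q ∣ x) with hW
  have habr : a * b * (r - 1) + a * b = a * b * r := by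
    have : a * b * (r - 1) + a * b = a * b * ((r - 1) + 1) := by ring
    rw [this]
    congr 1
    omega
  -- cards
  have hcT : T.card = C.card := Finset.card_image_of_injective _ (fun x y h => by omega)
  have hcU : U.card = a * r / q :=  by
    rw [hU, Finset.card_image_of_injective _ (fun x y h => by
      have : q * x = q * y := by
        have hb0 : 0 < b := by omega
        exact Nat.eq_of_mul_eq_mul_left hb0 h
      exact Nat.eq_of_mul_eq_mul_left hq0 this), Nat.card_Icc]
    simp
  have hcV : V.card = b * r / q := by
    rw [hV, Finset.card_image_of_injective _ (fun x y h => by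
      have : q * x = q * y := Nat.eq_of_mul_eq_mul_left (by omega) h
      exact Nat.eq_of_mul_eq_mul_left hq0 this), Nat.card_Icc]
    simp
  have hcW : W.card = a * b * r / q := Nat.Ioc_filter_dvd_card_eq_div _ _
  -- subsets
  have hTW : T ⊆ W := by
    intro x hx
    rw [hT, Finset.mem_image] at hx
    obtain ⟨m, hm, rfl⟩ := hx
    rw [hC, Finset.mem_filter] at hm
    obtain ⟨hmS, hmd⟩ := hm
    obtain ⟨h1, h2, _, _⟩ := hS m hmS
    rw [hW, Finset.mem_filter, Finset.mem_Ioc]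
    exact ⟨⟨by omega, by omega⟩, hmd⟩
  have hUW : U ⊆ W := by
    intro x hx
    rw [hU, Finset.mem_image] at hx
    obtain ⟨v, hv, rfl⟩ := hx
    rw [Finset.mem_Icc] at hv
    rw [hW, Finset.mem_filter, Finset.mem_Ioc]
    have h1 : q * v ≤ q * (a * r / q) := Nat.mul_le_mul_left _ hv.2
    have h2 : q * (a * r / q) ≤ a * r := Nat.mul_div_le _ _
    have h3 : b * (q * v) ≤ b * (a * r) := Nat.mul_le_mul_left _ (by omega)
    have h4 : b * (a * r) = a * b * r := by ring
    have hpos : 0 < b * (q * v) := Nat.mul_pos (by omega) (Nat.mul_pos hq0 (by omega))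
    refine ⟨⟨hpos, by omega⟩, ⟨b * v, by ring⟩⟩
  have hVW : V ⊆ W := by
    intro x hx
    rw [hV, Finset.mem_image] at hx
    obtain ⟨w, hw, rfl⟩ := hx
    rw [Finset.mem_Icc] at hw
    rw [hW, Finset.mem_filter, Finset.mem_Ioc]
    have h1 : q * w ≤ q * (b * r / q) := Nat.mul_le_mul_left _ hw.2
    have h2 : q * (b * r / q) ≤ b * r := Nat.mul_div_le _ _
    have h3 : a * (q * w) ≤ a * (b * r) := Nat.mul_le_mul_left _ (by omega)
    have h4 : a * (b * r) = a * b * r := by ring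
    have hpos : 0 < a * (q * w) := Nat.mul_pos (by omega) (Nat.mul_pos hq0 (by omega))
    refine ⟨⟨hpos, by omega⟩, ⟨a * w, by ring⟩⟩
  -- disjointness
  have hTU : Disjoint T U := by
    rw [Finset.disjoint_left]
    intro x hx hx'
    rw [hT, Finset.mem_image] at hx
    obtain ⟨m, hm, rfl⟩ := hx
    rw [hC, Finset.mem_filter] at hm
    obtain ⟨hmS, _⟩ := hm
    obtain ⟨_, _, _, hbm⟩ := hS m hmS
    rw [hU, Finset.mem_image] at hx'
    obtain ⟨v, _, hv⟩ := hx'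
    apply hbm
    have h1 : b ∣ a * b * (r - 1) + m := by rw [← hv]; exact ⟨q * v, rfl⟩
    have h2 : b ∣ a * b * (r - 1) := ⟨a * (r - 1), by ring⟩
    exact (Nat.dvd_add_right h2).mp h1
  have hTV : Disjoint T V := by
    rw [Finset.disjoint_left]
    intro x hx hx'
    rw [hT, Finset.mem_image] at hx
    obtain ⟨m, hm, rfl⟩ := hx
    rw [hC, Finset.mem_filter] at hm
    obtain ⟨hmS, _⟩ := hm
    obtain ⟨_, _, ham, _⟩ := hS m hmS
    rw [hV, Finset.mem_image] at hx'
    obtain ⟨w, _, hw⟩ := hx'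
    apply ham
    have h1 : a ∣ a * b * (r - 1) + m := by rw [← hw]; exact ⟨q * w, rfl⟩
    have h2 : a ∣ a * b * (r - 1) := ⟨b * (r - 1), by ring⟩
    exact (Nat.dvd_add_right h2).mp h1
  have hUV : Disjoint U V := by
    rw [Finset.disjoint_left]
    intro x hx hx'
    rw [hU, Finset.mem_image] at hx
    obtain ⟨v, hv, rfl⟩ := hx
    rw [Finset.mem_Icc] at hv
    rw [hV, Finset.mem_image] at hx'
    obtain ⟨w, hw, hwe⟩ := hx'
    rw [Finset.mem_Icc] at hw
    -- b * (q * v) = a * (q * w)  ⇒ b * v = a * w ⇒ a ∣ v ⇒ v ≥ a ⇒ contradiction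
    have h1 : q * (b * v) = q * (a * w) := by
      have e1 : q * (b * v) = b * (q * v) := by ring
      have e2 : q * (a * w) = a * (q * w) := by ring
      rw [e1, e2, hwe]
    have h2 : b * v = a * w := Nat.eq_of_mul_eq_mul_left (by omega) h1
    have h3 : a ∣ b * v := ⟨w, by omega⟩
    have h4 : a ∣ v := Nat.Coprime.dvd_of_dvd_mul_left hab h3
    have h5 : a ≤ v := Nat.le_of_dvd (by omega) h4
    have h6 : q * v ≤ q * (a * r / q) := Nat.mul_le_mul_left _ hv.2
    have h7 : q * (a * r / q) ≤ a * r := Nat.mul_div_le _ _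
    have h8 : a * r < a * q := Nat.mul_lt_mul_of_pos_left hrq (show 0 < a by omega)
    have h9 : q * a ≤ q * v := Nat.mul_le_mul_left _ h5
    have h10 : q * a = a * q := by ring
    omega
  -- combine
  have hunion : (T ∪ U ∪ V).card = T.card + U.card + V.card := by
    rw [Finset.card_union_of_disjoint, Finset.card_union_of_disjoint hTU]
    rw [Finset.disjoint_union_left]
    exact ⟨hTV, hUV⟩
  have hsub : T ∪ U ∪ V ⊆ W := by
    intro x hx
    rcases Finset.mem_union.mp hx with hx | hx
    · rcases Finset.mem_union.mp hx with hx | hx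
      · exact hTW hx
      · exact hUW hx
    · exact hVW hx
  have := Finset.card_le_card hsub
  omega

include ha hb hab in
/-- Core per-power inequality. -/
lemma core {q : ℕ} (hq : 2 ≤ q) {i : ℕ} (hi : 1 ≤ i) (S : Finset ℕ)
    (hS : ∀ m ∈ S, 0 < m ∧ m ≤ a * b ∧ ¬ a ∣ m ∧ ¬ b ∣ m) :
    a * i / q + b * i / q + S.card * (if q ∣ i then 1 else 0)
        + (S.filter (fun m => q ∣ a * b * (i - 1) + m)).card
      ≤ a * b * i / q + (2 * S.card + 1) * (i / q) := by
  classical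
  have hq0 : 0 < q := by omega
  set u := i / q with hu
  set r := i % q with hr
  have hiur : i = q * u + r := (Nat.div_add_mod i q).symm
  have hrq : r < q := Nat.mod_lt _ hq0
  -- expand the divisions
  have hda : a * i / q = a * u + a * r / q := by
    have h1 : a * i = q * (a * u) + a * r := by rw [hiur]; ring
    rw [h1, Nat.mul_add_div hq0]
  have hdb : b * i / q = b * u + b * r / q := by
    have h1 : b * i = q * (b * u) + b * r := by rw [hiur]; ring
    rw [h1, Nat.mul_add_div hq0]
  have hdab : a * b * i / q = a * b * u + a * b * r / q := by
    have h1 : a * b * i = q * (a * b * u) + a * b * r := by rw [hiur]; ring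
    rw [h1, Nat.mul_add_div hq0]
  have hcle : (S.filter (fun m => q ∣ a * b * (i - 1) + m)).card ≤ S.card :=
    Finset.card_filter_le _ _
  have hab1 : a + b ≤ a * b + 1 := by nlinarith
  rcases Nat.eq_zero_or_pos r with hr0 | hr1
  · -- q ∣ i
    have hdvd : q ∣ i := by
      rw [hiur, hr0]
      exact ⟨u, by ring⟩
    have hu1 : 1 ≤ u := by
      rcases Nat.eq_zero_or_pos u with h | h
      · rw [h, Nat.mul_zero] at hiur; omega
      · exact h
    rw [if_pos hdvd, hda, hdb, hdab, hr0]
    simp only [Nat.mul_zero, Nat.zero_div, Nat.add_zero]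
    have e1 : (2 * S.card + 1) * u = 2 * (S.card * u) + u := by ring
    have e2 : S.card ≤ S.card * u := Nat.le_mul_of_pos_right _ hu1
    have e3 : a * u + b * u ≤ a * b * u + u := by
      have : (a + b) * u ≤ (a * b + 1) * u := Nat.mul_le_mul_right _ hab1
      have e4 : (a + b) * u = a * u + b * u := by ring
      have e5 : (a * b + 1) * u = a * b * u + u := by ring
      omega
    omega
  · -- r ≥ 1 : q does not divide i
    have hndvd : ¬ q ∣ i := by
      intro hcon
      obtain ⟨c, hc⟩ := hcon
      have h0 : i % q = 0 := by rw [hc]; exact Nat.mul_mod_right q c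
      omega
    rw [if_neg hndvd, hda, hdb, hdab]
    -- transform the filter predicate
    have hfilter : S.filter (fun m => q ∣ a * b * (i - 1) + m)
        = S.filter (fun m => q ∣ a * b * (r - 1) + m) := by
      apply Finset.filter_congr
      intro m _
      have he : a * b * (i - 1) + m = q * (a * b * u) + (a * b * (r - 1) + m) := by
        have h1 : i - 1 = q * u + (r - 1) := by omega
        rw [h1]
        have h2 : a * b * (q * u + (r - 1)) = q * (a * b * u) + a * b * (r - 1) := by ring
        omega
      rw [he]
      exact Nat.dvd_add_right ⟨a * b * u, rfl⟩
    rw [hfilter]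
    have hcrux := crux ha hb hab hr1 hrq S hS
    have e3 : a * u + b * u ≤ a * b * u + u := by
      have h : (a + b) * u ≤ (a * b + 1) * u := Nat.mul_le_mul_right _ hab1
      have e4 : (a + b) * u = a * u + b * u := by ring
      have e5 : (a * b + 1) * u = a * b * u + u := by ring
      omega
    have e6 : (2 * S.card + 1) * u = 2 * (S.card * u) + u := by ring
    have e8 : u ≤ (2 * S.card + 1) * u := Nat.le_mul_of_pos_left _ (by omega)
    omega

end

/-- `p`-adic valuation as a count of powers dividing. -/
lemma fact_count {p m B : ℕ} (hp : p.Prime) (hm : m ≠ 0) (hB : m < p ^ B) :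
    m.factorization p = ((Finset.Ico 1 B).filter (fun t => p ^ t ∣ m)).card := by
  set v := m.factorization p with hv
  have hdvd : p ^ v ∣ m := Nat.ordProj_dvd m p
  have hvB : v < B := by
    by_contra hcon
    push_neg at hcon
    have h1 : p ^ B ≤ p ^ v := Nat.pow_le_pow_right hp.pos hcon
    have h2 : p ^ v ≤ m := Nat.le_of_dvd (Nat.pos_of_ne_zero hm) hdvd
    omega
  have hfe : (Finset.Ico 1 B).filter (fun t => p ^ t ∣ m) = Finset.Ico 1 (v + 1) := by
    ext t
    simp only [Finset.mem_filter, Finset.mem_Ico]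
    constructor
    · rintro ⟨⟨h1, h2⟩, h3⟩
      have := (Nat.Prime.pow_dvd_iff_le_factorization hp hm).mp h3
      omega
    · rintro ⟨h1, h2⟩
      refine ⟨⟨h1, by omega⟩, ?_⟩
      exact (Nat.Prime.pow_dvd_iff_le_factorization hp hm).mpr (by omega)
  rw [hfe, Nat.card_Ico]
  omega

theorem main (a b : ℕ) (ha : 2 ≤ a) (hb : 2 ≤ b)
    (hab : Nat.gcd a b = 1) (i : ℕ) (hi : 1 ≤ i) :
    i ^ ((a - 1) * (b - 1) / 2) *
        (∏ m ∈ (Finset.Icc 1 (a * b * i)).filter (fun m => ell a b m = i), m) *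
        Nat.factorial (a * i) * Nat.factorial (b * i) ∣
      Nat.factorial i ^ ((a - 1) * (b - 1)) * Nat.factorial i *
        Nat.factorial (a * b * i) := by
  classical
  have hab' : Nat.Coprime a b := hab
  set s := (Sfin a b).card with hs
  have h2s : (a - 1) * (b - 1) = 2 * s := (sylvester ha hb hab').symm
  have hs2 : (a - 1) * (b - 1) / 2 = s := by omega
  rw [hs2, h2s, filter_eq_image ha hb hab' hi,
    Finset.prod_image (fun x _ y _ h => by omega)]
  -- notation
  set S := Sfin a b with hSdef
  have hSprops : ∀ m ∈ S, 0 < m ∧ m ≤ a * b ∧ ¬ a ∣ m ∧ ¬ b ∣ m := by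
    intro m hm
    have := mem_Sfin_props ha hb hab' hm
    exact ⟨this.1, this.2.1, this.2.2.2.1, this.2.2.2.2⟩
  have hi0 : i ≠ 0 := by omega
  have hterm0 : ∀ m ∈ S, a * b * (i - 1) + m ≠ 0 := fun m hm => by
    have := (hSprops m hm).1; omega
  have hP0 : (∏ m ∈ S, (a * b * (i - 1) + m)) ≠ 0 :=
    Finset.prod_ne_zero_iff.mpr hterm0
  have hL0 : i ^ s * (∏ m ∈ S, (a * b * (i - 1) + m)) * (a * i)! * (b * i)! ≠ 0 :=
    mul_ne_zero (mul_ne_zero (mul_ne_zero (pow_ne_zero _ hi0) hP0)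
      (Nat.factorial_ne_zero _)) (Nat.factorial_ne_zero _)
  have hR0 : (i)! ^ (2 * s) * (i)! * (a * b * i)! ≠ 0 :=
    mul_ne_zero (mul_ne_zero (pow_ne_zero _ (Nat.factorial_ne_zero _))
      (Nat.factorial_ne_zero _)) (Nat.factorial_ne_zero _)
  rw [← Nat.factorization_le_iff_dvd hL0 hR0, Finsupp.le_def]
  intro p
  by_cases hp : p.Prime
  case neg =>
    simp [Nat.factorization_eq_zero_of_not_prime _ hp]
  case pos =>
  haveI : Fact p.Prime := ⟨hp⟩
  have hp2 : 2 ≤ p := hp.two_le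
  set B := a * b * i + 1 with hB
  have hqt : ∀ t, t ∈ Finset.Ico 1 B → 2 ≤ p ^ t := by
    intro t ht
    rw [Finset.mem_Ico] at ht
    calc 2 = 2 ^ 1 := by norm_num
    _ ≤ 2 ^ t := Nat.pow_le_pow_right (by norm_num) ht.1
    _ ≤ p ^ t := Nat.pow_le_pow_left hp2 _
  have hlt : ∀ m : ℕ, m ≤ a * b * i → m < p ^ B := by
    intro m hm
    calc m ≤ a * b * i := hm
    _ < 2 ^ (a * b * i + 1) := by
        have := Nat.lt_two_pow_self (n := a * b * i)
        have h2 : (2:ℕ) ^ (a * b * i) ≤ 2 ^ (a * b * i + 1) := Nat.pow_le_pow_right (by norm_num) (by omega)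
        omega
    _ ≤ p ^ B := Nat.pow_le_pow_left hp2 _
  have hai_le : a * i ≤ a * b * i := by
    have h1 : a * i ≤ a * i * b := Nat.le_mul_of_pos_right _ (by omega)
    have h2 : a * i * b = a * b * i := by ring
    omega
  have hbi_le : b * i ≤ a * b * i := by
    have h1 : b * i ≤ b * i * a := Nat.le_mul_of_pos_right _ (by omega)
    have h2 : b * i * a = a * b * i := by ring
    omega
  have hi_le : i ≤ a * b * i := by
    have h1 : i ≤ i * (a * b) := Nat.le_mul_of_pos_right _ (by positivity)
    have h2 : i * (a * b) = a * b * i := by ring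
    omega
  -- factorial factorizations
  have hfact : ∀ n : ℕ, n ≤ a * b * i →
      (n !).factorization p = ∑ t ∈ Finset.Ico 1 B, n / p ^ t := by
    intro n hn
    rw [Nat.factorization_def _ hp]
    exact padicValNat_factorial (by
      have := Nat.log_le_self p n
      omega)
  -- single number factorizations as counts
  have hcnt : ∀ m : ℕ, m ≠ 0 → m ≤ a * b * i →
      m.factorization p = ∑ t ∈ Finset.Ico 1 B, (if p ^ t ∣ m then 1 else 0) := by
    intro m hm0 hmle
    rw [fact_count hp hm0 (hlt m hmle), Finset.card_filter]
  -- the c_t counts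
  have hsum_prod : (∑ m ∈ S, (a * b * (i - 1) + m).factorization p)
      = ∑ t ∈ Finset.Ico 1 B,
          ((S.filter (fun m => p ^ t ∣ a * b * (i - 1) + m)).card) := by
    have h1 : ∀ m ∈ S, (a * b * (i - 1) + m).factorization p
        = ∑ t ∈ Finset.Ico 1 B, (if p ^ t ∣ a * b * (i - 1) + m then 1 else 0) := by
      intro m hm
      apply hcnt _ (hterm0 m hm)
      have h2 := (hSprops m hm).2.1
      have h3 : a * b * (i - 1) + a * b = a * b * i := by
        have : a * b * (i - 1) + a * b = a * b * ((i - 1) + 1) := by ring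
        rw [this]; congr 1; omega
      omega
    rw [Finset.sum_congr rfl h1, Finset.sum_comm]
    apply Finset.sum_congr rfl
    intro t _
    rw [Finset.card_filter]
  -- decompose LHS factorization
  have hLdec : (i ^ s * (∏ m ∈ S, (a * b * (i - 1) + m)) * (a * i)! * (b * i)!).factorization p
      = s * i.factorization p + (∑ m ∈ S, (a * b * (i - 1) + m).factorization p)
        + ((a * i)!).factorization p + ((b * i)!).factorization p := by
    rw [Nat.factorization_mul (mul_ne_zero (mul_ne_zero (pow_ne_zero _ hi0) hP0) (Nat.factorial_ne_zero _)) (Nat.factorial_ne_zero _),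
      Nat.factorization_mul (mul_ne_zero (pow_ne_zero _ hi0) hP0) (Nat.factorial_ne_zero _),
      Nat.factorization_mul (pow_ne_zero _ hi0) hP0,
      Nat.factorization_pow, Nat.factorization_prod hterm0]
    simp [Finsupp.finset_sum_apply]
  have hRdec : ((i)! ^ (2 * s) * (i)! * (a * b * i)!).factorization p
      = (2 * s) * ((i)!).factorization p + ((i)!).factorization p
        + ((a * b * i)!).factorization p := by
    rw [Nat.factorization_mul (mul_ne_zero (pow_ne_zero _ (Nat.factorial_ne_zero _)) (Nat.factorial_ne_zero _)) (Nat.factorial_ne_zero _),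
      Nat.factorization_mul (pow_ne_zero _ (Nat.factorial_ne_zero _)) (Nat.factorial_ne_zero _),
      Nat.factorization_pow]
    simp
  rw [hLdec, hRdec, hsum_prod, hcnt i hi0 hi_le, hfact _ hai_le, hfact _ hbi_le,
    hfact _ hi_le, hfact _ (le_refl _)]
  -- now everything is sums over Ico 1 B
  have KEY : ∑ t ∈ Finset.Ico 1 B,
        (a * i / p ^ t + b * i / p ^ t + (s * (if p ^ t ∣ i then 1 else 0)
          + (S.filter (fun m => p ^ t ∣ a * b * (i - 1) + m)).card))
      ≤ ∑ t ∈ Finset.Ico 1 B,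
        (a * b * i / p ^ t + (2 * s * (i / p ^ t) + i / p ^ t)) := by
    apply Finset.sum_le_sum
    intro t ht
    have hc := core ha hb hab' (hqt t ht) hi S hSprops
    rw [← hs] at hc
    have he : (2 * s + 1) * (i / p ^ t) = 2 * s * (i / p ^ t) + i / p ^ t := by ring
    omega
  have e1 : ∑ t ∈ Finset.Ico 1 B,
        (a * i / p ^ t + b * i / p ^ t + (s * (if p ^ t ∣ i then 1 else 0)
          + (S.filter (fun m => p ^ t ∣ a * b * (i - 1) + m)).card))
      = (∑ t ∈ Finset.Ico 1 B, a * i / p ^ t) + (∑ t ∈ Finset.Ico 1 B, b * i / p ^ t)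
        + ((∑ t ∈ Finset.Ico 1 B, s * (if p ^ t ∣ i then 1 else 0))
          + ∑ t ∈ Finset.Ico 1 B, (S.filter (fun m => p ^ t ∣ a * b * (i - 1) + m)).card) := by
    simp only [Finset.sum_add_distrib]
  have e2 : ∑ t ∈ Finset.Ico 1 B,
        (a * b * i / p ^ t + (2 * s * (i / p ^ t) + i / p ^ t))
      = (∑ t ∈ Finset.Ico 1 B, a * b * i / p ^ t)
        + ((∑ t ∈ Finset.Ico 1 B, 2 * s * (i / p ^ t)) + ∑ t ∈ Finset.Ico 1 B, i / p ^ t) := by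
    simp only [Finset.sum_add_distrib]
  have e3 : ∑ t ∈ Finset.Ico 1 B, s * (if p ^ t ∣ i then 1 else 0)
      = s * ∑ t ∈ Finset.Ico 1 B, (if p ^ t ∣ i then 1 else 0) := (Finset.mul_sum _ _ _).symm
  have e4 : ∑ t ∈ Finset.Ico 1 B, 2 * s * (i / p ^ t)
      = 2 * s * ∑ t ∈ Finset.Ico 1 B, i / p ^ t := (Finset.mul_sum _ _ _).symm
  rw [e1, e2, e3, e4] at KEY
  omega


end OrderK

theorem order_K_odd_dvd (a b : ℕ) (ha : 2 ≤ a) (hb : 2 ≤ b)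
    (hab : Nat.gcd a b = 1) (i : ℕ) (hi : 1 ≤ i) :
    i ^ ((a - 1) * (b - 1) / 2) *
        (∏ m ∈ (Finset.Icc 1 (a * b * i)).filter (fun m => ell a b m = i), m) *
        Nat.factorial (a * i) * Nat.factorial (b * i) ∣
      Nat.factorial i ^ ((a - 1) * (b - 1)) * Nat.factorial i *
        Nat.factorial (a * b * i) :=
  OrderK.main a b ha hb hab i hi
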